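/- The acquaintance time of the barbell graph B_n satisfies AC(B_n) ≥ n − 2 for all n ≥ 2. -/

import Mathlib

/-- One round of the acquaintance process: the placement (a bijection from agents to
vertices) `x` is updated to `y` by letting agents swap along the edges of a matching of
`G`, i.e. `y = σ ∘ x` for an involution `σ` of the vertices moving each vertex to itself
or to a neighbor. -/
def IsMatchingStep {V : Type*} (G : SimpleGraph V) (x y : Equiv.Perm V) : Prop :=
  ∃ σ : Equiv.Perm V, (∀ v, σ (σ v) = v) ∧ (∀ v, σ v = v ∨ G.Adj v (σ v)) ∧
    ∀ a, y a = σ (x a)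

/-- An `m`-round strategy for acquaintance in `G`: starting from the identity placement,
each round is a matching swap, and every pair of distinct agents is at some time (≤ m)
located on a pair of adjacent vertices. -/
def IsAcqStrategy {V : Type*} (G : SimpleGraph V) (m : ℕ) (f : ℕ → Equiv.Perm V) : Prop :=
  f 0 = Equiv.refl V ∧ (∀ t < m, IsMatchingStep G (f t) (f (t + 1))) ∧
    ∀ a b : V, a ≠ b → ∃ t ≤ m, G.Adj (f t a) (f t b)

/-- The acquaintance time of `G`: the least number of rounds of a strategy for
acquaintance in `G`. -/
noncomputable def AC {V : Type*} (G : SimpleGraph V) : ℕ :=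
  sInf {m | ∃ f : ℕ → Equiv.Perm V, IsAcqStrategy G m f}

/-- The barbell graph on `n` vertices: a clique on the first `⌈n/2⌉` vertices and a clique
on the remaining `⌊n/2⌋` vertices, joined by a single bridge edge. -/
def barbell (n : ℕ) : SimpleGraph (Fin n) :=
  SimpleGraph.fromRel (fun i j =>
    ((i : ℕ) < (n + 1) / 2 ∧ (j : ℕ) < (n + 1) / 2) ∨
    ((n + 1) / 2 ≤ (i : ℕ) ∧ (n + 1) / 2 ≤ (j : ℕ)) ∨
    ((i : ℕ) = (n + 1) / 2 - 1 ∧ (j : ℕ) = (n + 1) / 2))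

open Finset

lemma barbell_adj {n : ℕ} (u v : Fin n) :
    (barbell n).Adj u v ↔ u ≠ v ∧
      (((u : ℕ) < (n+1)/2 ∧ (v : ℕ) < (n+1)/2) ∨
       ((n+1)/2 ≤ (u : ℕ) ∧ (n+1)/2 ≤ (v : ℕ)) ∨
       ((u : ℕ) = (n+1)/2 - 1 ∧ (v : ℕ) = (n+1)/2) ∨
       ((v : ℕ) = (n+1)/2 - 1 ∧ (u : ℕ) = (n+1)/2)) := by
  simp only [barbell, SimpleGraph.fromRel_adj]
  tauto

lemma image_card_le_changes {α : Type*} [DecidableEq α] (g : ℕ → α) (N : ℕ) :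
    ((range (N+1)).image g).card ≤
      1 + ((range N).filter (fun t => g (t+1) ≠ g t)).card := by
  induction N with
  | zero => simp
  | succ N ih =>
    have hsub : ((range N).filter (fun t => g (t+1) ≠ g t)).card ≤
        ((range (N+1)).filter (fun t => g (t+1) ≠ g t)).card := by
      apply card_le_card
      exact filter_subset_filter _ (by intro x hx; simp at hx ⊢; omega)
    rw [show N + 1 + 1 = (N+1) + 1 from rfl, range_add_one, image_insert]
    by_cases h : g (N+1) = g N
    · rw [insert_eq_self.2 (by rw [h]; exact mem_image.2 ⟨N, by simp, rfl⟩)]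
      omega
    · have hN : N ∈ (range (N+1)).filter (fun t => g (t+1) ≠ g t) := by simp [h]
      have hNn : N ∉ (range N).filter (fun t => g (t+1) ≠ g t) := by simp
      have hins : insert N ((range N).filter (fun t => g (t+1) ≠ g t)) ⊆
          (range (N+1)).filter (fun t => g (t+1) ≠ g t) := by
        intro x hx
        rcases mem_insert.1 hx with rfl | hx
        · exact hN
        · exact filter_subset_filter _ (by intro y hy; simp at hy ⊢; omega) hx
      have h2 := card_le_card hins
      rw [card_insert_of_notMem hNn] at h2
      have h3 := card_insert_le (g (N+1)) ((range (N+1)).image g)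
      omega

lemma lower_bound {n : ℕ} (hn : 2 ≤ n) (m : ℕ) (f : ℕ → Equiv.Perm (Fin n))
    (hf : IsAcqStrategy (barbell n) m f) : n - 2 ≤ m := by
  classical
  obtain ⟨hf0, hfstep, hfmeet⟩ := hf
  set k : ℕ := (n+1)/2 with hk
  have hk1 : 1 ≤ k := by omega
  have hkn : k < n := by omega
  set g₁ : Fin n := ⟨k-1, by omega⟩ with hg₁
  set g₂ : Fin n := ⟨k, hkn⟩ with hg₂
  have hg1v : (g₁ : ℕ) = k - 1 := rfl
  have hg2v : (g₂ : ℕ) = k := rfl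
  -- total choice of the matching permutations
  have hstep' : ∀ t, ∃ σ : Equiv.Perm (Fin n), (∀ v, σ (σ v) = v) ∧
      (∀ v, σ v = v ∨ (barbell n).Adj v (σ v)) ∧
      (t < m → ∀ a, f (t+1) a = σ (f t a)) := by
    intro t
    by_cases ht : t < m
    · obtain ⟨σ, h1, h2, h3⟩ := hfstep t ht
      exact ⟨σ, h1, h2, fun _ => h3⟩
    · exact ⟨1, by simp, fun v => Or.inl rfl, fun h => absurd h ht⟩
  choose σ hσ2 hσadj hσapp using hstep'
  -- cross lemma: a side-changing vertex is a gate vertex, and the round is a bridge round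
  have hcross : ∀ t (v : Fin n), ¬ (((σ t v : ℕ) < k) ↔ ((v : ℕ) < k)) →
      (v = g₁ ∨ v = g₂) ∧ σ t g₁ = g₂ := by
    intro t v hv
    have hne : σ t v ≠ v := by
      intro h; rw [h] at hv; tauto
    rcases hσadj t v with h | h
    · exact absurd h hne
    · rw [barbell_adj] at h
      rw [← hk] at h
      rcases h.2 with ⟨h1, h2⟩ | ⟨h1, h2⟩ | ⟨h1, h2⟩ | ⟨h1, h2⟩
      · exact absurd (iff_of_true h2 h1) hv
      · exact absurd (iff_of_false (by omega) (by omega)) hv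
      · have hvg : v = g₁ := Fin.ext (by rw [hg1v]; exact h1)
        exact ⟨Or.inl hvg, by rw [← hvg]; exact Fin.ext h2⟩
      · have hvg : v = g₂ := Fin.ext (by rw [hg2v]; exact h2)
        have hsv : σ t v = g₁ := Fin.ext (by rw [hg1v]; exact h1)
        have : σ t g₂ = g₁ := by rw [← hvg]; exact hsv
        refine ⟨Or.inr hvg, ?_⟩
        have h4 := hσ2 t g₂
        rw [this] at h4
        exact h4
  -- abroad predicate
  set Ab : Fin n → ℕ → Prop := fun a t => ¬ (((f t a : ℕ) < k) ↔ ((a : ℕ) < k)) with hAb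
  have hAb0 : ∀ a, ¬ Ab a 0 := by
    intro a
    simp only [hAb, hf0, Equiv.refl_apply, not_not]
  have hagent : ∀ t (a : Fin n), t < m → ¬ Ab a t → Ab a (t+1) →
      (f t a = g₁ ∨ f t a = g₂) ∧ σ t g₁ = g₂ := by
    intro t a ht h1 h2
    have happ := hσapp t ht a
    apply hcross t (f t a)
    rw [← happ]
    simp only [hAb, not_not] at h1 h2
    tauto
  -- first-abroad data
  have hfirst : ∀ a : Fin n, (∃ t, t ≤ m ∧ Ab a t) → ∃ t₁, 1 ≤ t₁ ∧ t₁ ≤ m ∧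
      Ab a t₁ ∧ (∀ s, s < t₁ → ¬ Ab a s) ∧
      (f (t₁-1) a = g₁ ∨ f (t₁-1) a = g₂) ∧ σ (t₁-1) g₁ = g₂ := by
    intro a hex
    have hex' : ∃ t, Ab a t := ⟨hex.choose, hex.choose_spec.2⟩
    set t₁ := Nat.find hex' with ht₁
    have hab : Ab a t₁ := Nat.find_spec hex'
    have hmin : ∀ s, s < t₁ → ¬ Ab a s := fun s hs => Nat.find_min hex' hs
    have hle : t₁ ≤ m := by
      obtain ⟨t, htm, htab⟩ := hex
      exact le_trans (Nat.find_min' hex' htab) htm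
    have h1 : 1 ≤ t₁ := by
      rcases Nat.eq_zero_or_pos t₁ with h | h
      · exact absurd (h ▸ hab) (hAb0 a)
      · exact h
    have hlt : t₁ - 1 < m := by omega
    have hnot : ¬ Ab a (t₁ - 1) := hmin _ (by omega)
    have hag := hagent (t₁-1) a hlt hnot
      (by rw [show t₁ - 1 + 1 = t₁ from by omega]; exact hab)
    exact ⟨t₁, h1, hle, hab, hmin, hag.1, hag.2⟩
  set T : Fin n → ℕ := fun a =>
    if h : ∃ t, t ≤ m ∧ Ab a t then (hfirst a h).choose else 0 with hT
  have hTspec : ∀ a : Fin n, (∃ t, t ≤ m ∧ Ab a t) →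
      1 ≤ T a ∧ T a ≤ m ∧ Ab a (T a) ∧ (∀ s, s < T a → ¬ Ab a s) ∧
      (f (T a - 1) a = g₁ ∨ f (T a - 1) a = g₂) ∧ σ (T a - 1) g₁ = g₂ := by
    intro a h
    simp only [hT, dif_pos h]
    exact (hfirst a h).choose_spec
  -- career sets
  set Pset : Finset (Fin n) :=
    univ.filter (fun a => (a : ℕ) < k ∧ ∃ t, t ≤ m ∧ Ab a t) with hPset
  set Qset : Finset (Fin n) :=
    univ.filter (fun a => k ≤ (a : ℕ) ∧ ∃ t, t ≤ m ∧ Ab a t) with hQset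
  have hPg1 : ∀ a ∈ Pset, f (T a - 1) a = g₁ ∧ 1 ≤ T a ∧ T a ≤ m ∧
      (∀ s, s < T a → ¬ Ab a s) ∧ σ (T a - 1) g₁ = g₂ := by
    intro a ha
    rw [hPset, mem_filter] at ha
    obtain ⟨-, hak, hex⟩ := ha
    obtain ⟨h1, h2, h3, h4, h5, h6⟩ := hTspec a hex
    refine ⟨?_, h1, h2, h4, h6⟩
    rcases h5 with h | h
    · exact h
    · exfalso
      have h7 : ¬ Ab a (T a - 1) := h4 _ (by omega)
      simp only [hAb, not_not] at h7
      rw [h, hg2v] at h7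
      exact absurd (h7.mpr hak) (by omega)
  have hQg2 : ∀ a ∈ Qset, f (T a - 1) a = g₂ ∧ 1 ≤ T a ∧ T a ≤ m ∧
      (∀ s, s < T a → ¬ Ab a s) ∧ σ (T a - 1) g₁ = g₂ := by
    intro a ha
    rw [hQset, mem_filter] at ha
    obtain ⟨-, hak, hex⟩ := ha
    obtain ⟨h1, h2, h3, h4, h5, h6⟩ := hTspec a hex
    refine ⟨?_, h1, h2, h4, h6⟩
    rcases h5 with h | h
    · exfalso
      have h7 : ¬ Ab a (T a - 1) := h4 _ (by omega)
      simp only [hAb, not_not] at h7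
      rw [h, hg1v] at h7
      exact absurd (h7.mp (by omega)) (by omega)
    · exact h
  -- round classification
  set BS : Finset ℕ := (range m).filter (fun t => σ t g₁ = g₂) with hBS
  set RS : Finset ℕ := (range m).filter
    (fun t => ¬ (σ t g₁ = g₂) ∧ (σ t g₁ ≠ g₁ ∨ σ t g₂ ≠ g₂)) with hRS
  have hsr : BS.card + RS.card ≤ m := by
    have hd : Disjoint BS RS := by
      rw [Finset.disjoint_left]
      intro x hx hx'
      rw [hBS, mem_filter] at hx
      rw [hRS, mem_filter] at hx'
      exact hx'.2.1 hx.2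
    have hsub : BS ∪ RS ⊆ range m :=
      union_subset (filter_subset _ _) (filter_subset _ _)
    have := card_le_card hsub
    rw [card_union_of_disjoint hd] at this
    simpa using this
  -- (A) careers need bridge rounds
  have hps : Pset.card ≤ BS.card := by
    apply card_le_card_of_injOn (fun a => T a - 1)
    · intro a ha
      obtain ⟨hg, h1, h2, hmin, hbr⟩ := hPg1 a ha
      rw [hBS, mem_coe, mem_filter, mem_range]
      exact ⟨show T a - 1 < m by omega, hbr⟩
    · intro a ha b hb hab2
      obtain ⟨hga, h1a, -, -, -⟩ := hPg1 a ha
      obtain ⟨hgb, h1b, -, -, -⟩ := hPg1 b hb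
      simp only at hab2
      rw [← hab2] at hgb
      exact (f (T a - 1)).injective (hga.trans hgb.symm)
  have hqs : Qset.card ≤ BS.card := by
    apply card_le_card_of_injOn (fun a => T a - 1)
    · intro a ha
      obtain ⟨hg, h1, h2, hmin, hbr⟩ := hQg2 a ha
      rw [hBS, mem_coe, mem_filter, mem_range]
      exact ⟨show T a - 1 < m by omega, hbr⟩
    · intro a ha b hb hab2
      obtain ⟨hga, h1a, -, -, -⟩ := hQg2 a ha
      obtain ⟨hgb, h1b, -, -, -⟩ := hQg2 b hb
      simp only at hab2
      rw [← hab2] at hgb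
      exact (f (T a - 1)).injective (hga.trans hgb.symm)
  -- (B) careers need refresh rounds : first visit to the gate
  have hUP : ∀ a ∈ Pset, a ≠ g₁ → ∃ u, u < m ∧ f (u+1) a = g₁ ∧
      ¬ (σ u g₁ = g₂) ∧ (σ u g₁ ≠ g₁ ∨ σ u g₂ ≠ g₂) := by
    intro a ha hne
    obtain ⟨hg, h1, h2, hmin, hbr⟩ := hPg1 a ha
    have hex : ∃ t, f t a = g₁ := ⟨T a - 1, hg⟩
    set u₁ := Nat.find hex with hu₁
    have hu1g : f u₁ a = g₁ := Nat.find_spec hex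
    have hu1min : ∀ s, s < u₁ → f s a ≠ g₁ := fun s hs => Nat.find_min hex hs
    have hu1le : u₁ ≤ T a - 1 := Nat.find_min' hex hg
    have hu1pos : 1 ≤ u₁ := by
      rcases Nat.eq_zero_or_pos u₁ with h | h
      · exfalso
        rw [h, hf0] at hu1g
        exact hne hu1g
      · exact h
    refine ⟨u₁ - 1, by omega, ?_, ?_, ?_⟩
    · rw [show u₁ - 1 + 1 = u₁ from by omega]; exact hu1g
    · intro hbru
      -- then f (u₁-1) a = g₂, so a was abroad before T a, and even before: contradiction
      have happ := hσapp (u₁ - 1) (by omega) a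
      rw [show u₁ - 1 + 1 = u₁ from by omega] at happ
      rw [hu1g] at happ
      -- g₁ = σ (u₁-1) (f (u₁-1) a)
      have hfu : f (u₁ - 1) a = σ (u₁ - 1) g₁ := by
        have h5 := hσ2 (u₁ - 1) (f (u₁ - 1) a)
        rw [← happ] at h5
        exact h5.symm
      rw [hbru] at hfu
      -- a is at g₂ at time u₁ - 1 : abroad since a < k
      have hak : (a : ℕ) < k := by
        rw [hPset, mem_filter] at ha
        exact ha.2.1
      have hab : Ab a (u₁ - 1) := by
        simp only [hAb, hfu, hg2v, not_iff]
        constructor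
        · intro h; omega
        · intro h; omega
      have hTle : T a ≤ u₁ - 1 := by
        by_contra hcon
        exact hmin _ (by omega) hab
      exact hu1min (T a - 1) (by omega) hg
    · left
      intro heq
      have happ := hσapp (u₁ - 1) (by omega) a
      rw [show u₁ - 1 + 1 = u₁ from by omega] at happ
      rw [hu1g] at happ
      have hfu : f (u₁ - 1) a = σ (u₁ - 1) g₁ := by
        have h5 := hσ2 (u₁ - 1) (f (u₁ - 1) a)
        rw [← happ] at h5
        exact h5.symm
      rw [heq] at hfu
      exact hu1min (u₁ - 1) (by omega) hfu
  have hUQ : ∀ a ∈ Qset, a ≠ g₂ → ∃ u, u < m ∧ f (u+1) a = g₂ ∧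
      ¬ (σ u g₁ = g₂) ∧ (σ u g₁ ≠ g₁ ∨ σ u g₂ ≠ g₂) := by
    intro a ha hne
    obtain ⟨hg, h1, h2, hmin, hbr⟩ := hQg2 a ha
    have hex : ∃ t, f t a = g₂ := ⟨T a - 1, hg⟩
    set u₁ := Nat.find hex with hu₁
    have hu1g : f u₁ a = g₂ := Nat.find_spec hex
    have hu1min : ∀ s, s < u₁ → f s a ≠ g₂ := fun s hs => Nat.find_min hex hs
    have hu1le : u₁ ≤ T a - 1 := Nat.find_min' hex hg
    have hu1pos : 1 ≤ u₁ := by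
      rcases Nat.eq_zero_or_pos u₁ with h | h
      · exfalso
        rw [h, hf0] at hu1g
        exact hne hu1g
      · exact h
    have happ := hσapp (u₁ - 1) (by omega) a
    rw [show u₁ - 1 + 1 = u₁ from by omega] at happ
    rw [hu1g] at happ
    have hfu : f (u₁ - 1) a = σ (u₁ - 1) g₂ := by
      have h5 := hσ2 (u₁ - 1) (f (u₁ - 1) a)
      rw [← happ] at h5
      exact h5.symm
    refine ⟨u₁ - 1, by omega, ?_, ?_, ?_⟩
    · rw [show u₁ - 1 + 1 = u₁ from by omega]; exact hu1g
    · intro hbru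
      have hbru2 : σ (u₁ - 1) g₂ = g₁ := by
        have h5 := hσ2 (u₁ - 1) g₁
        rw [hbru] at h5
        exact h5
      rw [hbru2] at hfu
      have hak : k ≤ (a : ℕ) := by
        rw [hQset, mem_filter] at ha
        exact ha.2.1
      have hab : Ab a (u₁ - 1) := by
        simp only [hAb, hfu, hg1v, not_iff]
        constructor
        · intro h; omega
        · intro h; omega
      have hTle : T a ≤ u₁ - 1 := by
        by_contra hcon
        exact hmin _ (by omega) hab
      exact hu1min (T a - 1) (by omega) hg
    · right
      intro heq
      rw [heq] at hfu
      exact hu1min (u₁ - 1) (by omega) hfu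
  have hpr : Pset.card ≤ RS.card + 1 := by
    set UU : Fin n → ℕ := fun a => if h : ∃ u, u < m ∧ f (u+1) a = g₁ ∧
        ¬ (σ u g₁ = g₂) ∧ (σ u g₁ ≠ g₁ ∨ σ u g₂ ≠ g₂) then h.choose else 0 with hUU
    have hUUspec : ∀ a ∈ Pset.erase g₁, UU a < m ∧ f (UU a + 1) a = g₁ ∧
        ¬ (σ (UU a) g₁ = g₂) ∧ (σ (UU a) g₁ ≠ g₁ ∨ σ (UU a) g₂ ≠ g₂) := by
      intro a ha
      rw [mem_erase] at ha
      have hex := hUP a ha.2 ha.1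
      rw [hUU]
      simp only [dif_pos hex]
      exact hex.choose_spec
    have hinj : (Pset.erase g₁).card ≤ RS.card := by
      apply card_le_card_of_injOn UU
      · intro a ha
        obtain ⟨h1, h2, h3, h4⟩ := hUUspec a ha
        rw [hRS, mem_coe, mem_filter, mem_range]
        exact ⟨h1, h3, h4⟩
      · intro a ha b hb hab2
        obtain ⟨h1a, h2a, -, -⟩ := hUUspec a ha
        obtain ⟨h1b, h2b, -, -⟩ := hUUspec b hb
        rw [← hab2] at h2b
        exact (f (UU a + 1)).injective (h2a.trans h2b.symm)
    by_cases hmem : g₁ ∈ Pset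
    · rw [card_erase_of_mem hmem] at hinj
      omega
    · rw [erase_eq_of_notMem hmem] at hinj
      omega
  have hqr : Qset.card ≤ RS.card + 1 := by
    set UU : Fin n → ℕ := fun a => if h : ∃ u, u < m ∧ f (u+1) a = g₂ ∧
        ¬ (σ u g₁ = g₂) ∧ (σ u g₁ ≠ g₁ ∨ σ u g₂ ≠ g₂) then h.choose else 0 with hUU
    have hUUspec : ∀ a ∈ Qset.erase g₂, UU a < m ∧ f (UU a + 1) a = g₂ ∧
        ¬ (σ (UU a) g₁ = g₂) ∧ (σ (UU a) g₁ ≠ g₁ ∨ σ (UU a) g₂ ≠ g₂) := by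
      intro a ha
      rw [mem_erase] at ha
      have hex := hUQ a ha.2 ha.1
      rw [hUU]
      simp only [dif_pos hex]
      exact hex.choose_spec
    have hinj : (Qset.erase g₂).card ≤ RS.card := by
      apply card_le_card_of_injOn UU
      · intro a ha
        obtain ⟨h1, h2, h3, h4⟩ := hUUspec a ha
        rw [hRS, mem_coe, mem_filter, mem_range]
        exact ⟨h1, h3, h4⟩
      · intro a ha b hb hab2
        obtain ⟨h1a, h2a, -, -⟩ := hUUspec a ha
        obtain ⟨h1b, h2b, -, -⟩ := hUUspec b hb
        rw [← hab2] at h2b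
        exact (f (UU a + 1)).injective (h2a.trans h2b.symm)
    by_cases hmem : g₂ ∈ Qset
    · rw [card_erase_of_mem hmem] at hinj
      omega
    · rw [erase_eq_of_notMem hmem] at hinj
      omega
  -- gate pair evolution
  have hsymm : ∀ t, t < m → ∀ w, (f (t+1)).symm w = (f t).symm (σ t w) := by
    intro t ht w
    apply (f (t+1)).injective
    rw [Equiv.apply_symm_apply, hσapp t ht, Equiv.apply_symm_apply, hσ2]
  set gp : ℕ → Fin n × Fin n := fun t =>
    if (f t).symm g₁ ≤ (f t).symm g₂ then ((f t).symm g₁, (f t).symm g₂)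
    else ((f t).symm g₂, (f t).symm g₁) with hgp
  have hnorm : ∀ x y : Fin n,
      (if x ≤ y then (x, y) else (y, x)) = (if y ≤ x then (y, x) else (x, y)) := by
    intro x y
    by_cases h : x ≤ y
    · by_cases h2 : y ≤ x
      · simp [h, h2, le_antisymm h h2]
      · simp [h, h2]
    · have h2 : y ≤ x := le_of_not_ge h
      simp [h, h2]
  have hgpchg : ∀ t, t < m → gp (t+1) ≠ gp t →
      ¬ (σ t g₁ = g₂) ∧ (σ t g₁ ≠ g₁ ∨ σ t g₂ ≠ g₂) := by
    intro t ht hchg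
    by_cases hb : σ t g₁ = g₂
    · exfalso
      apply hchg
      have hb2 : σ t g₂ = g₁ := by
        have h5 := hσ2 t g₁
        rw [hb] at h5
        exact h5
      simp only [hgp, hsymm t ht, hb, hb2]
      exact hnorm ((f t).symm g₂) ((f t).symm g₁)
    · refine ⟨hb, ?_⟩
      by_contra hcon
      push_neg at hcon
      apply hchg
      simp only [hgp, hsymm t ht, hcon.1, hcon.2]
  set GP : Finset (Fin n × Fin n) := (range (m+1)).image gp with hGP
  have hGPcard : GP.card ≤ 1 + RS.card := by
    have h1 := image_card_le_changes gp m
    have h2 : (range m).filter (fun t => gp (t+1) ≠ gp t) ⊆ RS := by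
      intro t ht
      rw [mem_filter, mem_range] at ht
      rw [hRS, mem_filter, mem_range]
      exact ⟨ht.1, hgpchg t ht.1 ht.2⟩
    calc GP.card ≤ 1 + ((range m).filter (fun t => gp (t+1) ≠ gp t)).card := h1
      _ ≤ 1 + RS.card := by
          have := card_le_card h2
          omega
  -- never-abroad sets
  set A0 : Finset (Fin n) :=
    univ.filter (fun a => (a : ℕ) < k ∧ ∀ t, t ≤ m → ¬ Ab a t) with hA0
  set B0 : Finset (Fin n) :=
    univ.filter (fun a => k ≤ (a : ℕ) ∧ ∀ t, t ≤ m → ¬ Ab a t) with hB0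
  have hpa : k ≤ Pset.card + A0.card := by
    have hsub : (univ.filter (fun a : Fin n => (a : ℕ) < k)) ⊆ Pset ∪ A0 := by
      intro a ha
      rw [mem_filter] at ha
      by_cases h : ∃ t, t ≤ m ∧ Ab a t
      · exact mem_union_left _ (by rw [hPset, mem_filter]; exact ⟨mem_univ a, ha.2, h⟩)
      · exact mem_union_right _ (by
          rw [hA0, mem_filter]
          exact ⟨mem_univ a, ha.2, fun t ht hab => h ⟨t, ht, hab⟩⟩)
    have hcard : (univ.filter (fun a : Fin n => (a : ℕ) < k)).card = k := by
      have : (univ.filter (fun a : Fin n => (a : ℕ) < k)) = Finset.Iio g₂ := by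
        ext a
        simp [Finset.mem_Iio, Fin.lt_def, hg2v]
      rw [this, Fin.card_Iio, hg2v]
    calc k = (univ.filter (fun a : Fin n => (a : ℕ) < k)).card := hcard.symm
      _ ≤ (Pset ∪ A0).card := card_le_card hsub
      _ ≤ Pset.card + A0.card := card_union_le _ _
  have hqb : n - k ≤ Qset.card + B0.card := by
    have hsub : (univ.filter (fun a : Fin n => k ≤ (a : ℕ))) ⊆ Qset ∪ B0 := by
      intro a ha
      rw [mem_filter] at ha
      by_cases h : ∃ t, t ≤ m ∧ Ab a t
      · exact mem_union_left _ (by rw [hQset, mem_filter]; exact ⟨mem_univ a, ha.2, h⟩)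
      · exact mem_union_right _ (by
          rw [hB0, mem_filter]
          exact ⟨mem_univ a, ha.2, fun t ht hab => h ⟨t, ht, hab⟩⟩)
    have hcard : (univ.filter (fun a : Fin n => k ≤ (a : ℕ))).card = n - k := by
      have h1 := card_filter_add_card_filter_not
        (s := (univ : Finset (Fin n))) (p := fun a : Fin n => (a : ℕ) < k)
      have hcard1 : (univ.filter (fun a : Fin n => (a : ℕ) < k)).card = k := by
        have : (univ.filter (fun a : Fin n => (a : ℕ) < k)) = Finset.Iio g₂ := by
          ext a
          simp [Finset.mem_Iio, Fin.lt_def, hg2v]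
        rw [this, Fin.card_Iio, hg2v]
      have h2 : (univ.filter (fun a : Fin n => ¬ (a : ℕ) < k)) =
          (univ.filter (fun a : Fin n => k ≤ (a : ℕ))) := by
        apply filter_congr
        intro a _
        simp [not_lt]
      rw [hcard1, h2] at h1
      have h3 : (univ : Finset (Fin n)).card = n := by simp
      omega
    calc n - k = (univ.filter (fun a : Fin n => k ≤ (a : ℕ))).card := hcard.symm
      _ ≤ (Qset ∪ B0).card := card_le_card hsub
      _ ≤ Qset.card + B0.card := card_union_le _ _
  -- serving pairs
  have hserve : ∀ a ∈ A0, ∀ b ∈ B0, (a, b) ∈ GP := by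
    intro a ha b hb
    rw [hA0, mem_filter] at ha
    rw [hB0, mem_filter] at hb
    obtain ⟨-, hak, hanot⟩ := ha
    obtain ⟨-, hbk, hbnot⟩ := hb
    have hne : a ≠ b := by
      intro h
      rw [h] at hak
      omega
    obtain ⟨t, htm, hadj⟩ := hfmeet a b hne
    have hfa : ((f t a : ℕ) < k) := by
      have h := hanot t htm
      simp only [hAb, not_not] at h
      exact h.mpr hak
    have hfb : k ≤ (f t b : ℕ) := by
      have h := hbnot t htm
      simp only [hAb, not_not] at h
      by_contra hcon
      exact absurd (h.mp (by omega)) (by omega)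
    rw [barbell_adj, ← hk] at hadj
    have hmeetg : f t a = g₁ ∧ f t b = g₂ := by
      rcases hadj.2 with ⟨h1, h2⟩ | ⟨h1, h2⟩ | ⟨h1, h2⟩ | ⟨h1, h2⟩
      · omega
      · omega
      · exact ⟨Fin.ext (by rw [hg1v]; exact h1), Fin.ext (by rw [hg2v]; exact h2)⟩
      · omega
    have hsa : (f t).symm g₁ = a := ((f t).symm_apply_eq).2 hmeetg.1.symm
    have hsb : (f t).symm g₂ = b := ((f t).symm_apply_eq).2 hmeetg.2.symm
    have hab : a ≤ b := by
      rw [Fin.le_def]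
      omega
    have hgpt : gp t = (a, b) := by
      simp only [hgp, hsa, hsb, if_pos hab]
    rw [hGP]
    exact mem_image.2 ⟨t, mem_range.2 (by omega), hgpt⟩
  set GPserv : Finset (Fin n × Fin n) :=
    GP.filter (fun e => e.1 ∈ A0 ∧ e.2 ∈ B0) with hGPserv
  set GPcar : Finset (Fin n × Fin n) :=
    GP.filter (fun e => e.1 ∈ Pset ∪ Qset ∨ e.2 ∈ Pset ∪ Qset) with hGPcar
  have hA0PQ : ∀ x : Fin n, x ∈ A0 → x ∉ Pset ∪ Qset := by
    intro x hx hmem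
    rw [hA0, mem_filter] at hx
    rcases mem_union.1 hmem with h | h
    · rw [hPset, mem_filter] at h
      obtain ⟨t, ht, hab⟩ := h.2.2
      exact hx.2.2 t ht hab
    · rw [hQset, mem_filter] at h
      have := hx.2.1
      have := h.2.1
      omega
  have hB0PQ : ∀ x : Fin n, x ∈ B0 → x ∉ Pset ∪ Qset := by
    intro x hx hmem
    rw [hB0, mem_filter] at hx
    rcases mem_union.1 hmem with h | h
    · rw [hPset, mem_filter] at h
      have := hx.2.1
      have := h.2.1
      omega
    · rw [hQset, mem_filter] at h
      obtain ⟨t, ht, hab⟩ := h.2.2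
      exact hx.2.2 t ht hab
  have hdisj2 : Disjoint GPserv GPcar := by
    rw [Finset.disjoint_left]
    intro e he he'
    rw [hGPserv, mem_filter] at he
    rw [hGPcar, mem_filter] at he'
    rcases he'.2 with h | h
    · exact hA0PQ e.1 he.2.1 h
    · exact hB0PQ e.2 he.2.2 h
  have hprodsub : A0 ×ˢ B0 ⊆ GPserv := by
    intro e he
    rw [mem_product] at he
    rw [hGPserv, mem_filter]
    refine ⟨?_, he.1, he.2⟩
    have := hserve e.1 he.1 e.2 he.2
    simpa using this
  have hservcard : A0.card * B0.card ≤ GPserv.card := by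
    calc A0.card * B0.card = (A0 ×ˢ B0).card := (card_product _ _).symm
      _ ≤ GPserv.card := card_le_card hprodsub
  -- career agents appear in gate pairs
  have hcover : Pset ∪ Qset ⊆ GPcar.biUnion (fun e => {e.1, e.2}) := by
    intro c hc
    have hcomp : gp (T c - 1) ∈ GP ∧ (c = (gp (T c - 1)).1 ∨ c = (gp (T c - 1)).2) := by
      rcases mem_union.1 hc with h | h
      · obtain ⟨hg, h1, h2, -, -⟩ := hPg1 c h
        have hsc : (f (T c - 1)).symm g₁ = c := ((f (T c - 1)).symm_apply_eq).2 hg.symm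
        constructor
        · rw [hGP]
          exact mem_image.2 ⟨T c - 1, mem_range.2 (by omega), rfl⟩
        · simp only [hgp, hsc]
          by_cases hif : c ≤ (f (T c - 1)).symm g₂
          · rw [if_pos hif]
            exact Or.inl rfl
          · rw [if_neg hif]
            exact Or.inr rfl
      · obtain ⟨hg, h1, h2, -, -⟩ := hQg2 c h
        have hsc : (f (T c - 1)).symm g₂ = c := ((f (T c - 1)).symm_apply_eq).2 hg.symm
        constructor
        · rw [hGP]
          exact mem_image.2 ⟨T c - 1, mem_range.2 (by omega), rfl⟩
        · simp only [hgp, hsc]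
          by_cases hif : (f (T c - 1)).symm g₁ ≤ c
          · rw [if_pos hif]
            exact Or.inr rfl
          · rw [if_neg hif]
            exact Or.inl rfl
    rw [mem_biUnion]
    refine ⟨gp (T c - 1), ?_, ?_⟩
    · rw [hGPcar, mem_filter]
      refine ⟨hcomp.1, ?_⟩
      rcases hcomp.2 with h | h
      · exact Or.inl (h ▸ hc)
      · exact Or.inr (h ▸ hc)
    · rcases hcomp.2 with h | h
      · exact mem_insert.2 (Or.inl h)
      · exact mem_insert.2 (Or.inr (mem_singleton.2 h))
  have hPQdisj : Disjoint Pset Qset := by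
    rw [Finset.disjoint_left]
    intro x hx hx'
    rw [hPset, mem_filter] at hx
    rw [hQset, mem_filter] at hx'
    have := hx.2.1
    have := hx'.2.1
    omega
  have hpq2 : Pset.card + Qset.card ≤ 2 * GPcar.card := by
    calc Pset.card + Qset.card = (Pset ∪ Qset).card := (card_union_of_disjoint hPQdisj).symm
      _ ≤ (GPcar.biUnion (fun e => {e.1, e.2})).card := card_le_card hcover
      _ ≤ ∑ e ∈ GPcar, ({e.1, e.2} : Finset (Fin n)).card := card_biUnion_le
      _ ≤ ∑ e ∈ GPcar, 2 := sum_le_sum (fun e _ =>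
          (card_insert_le _ _).trans (by rw [card_singleton]))
      _ = 2 * GPcar.card := by rw [sum_const, smul_eq_mul, mul_comm]
  have hserv : A0.card * B0.card + GPcar.card ≤ RS.card + 1 := by
    have h1 : GPserv.card + GPcar.card ≤ GP.card := by
      rw [← card_union_of_disjoint hdisj2]
      exact card_le_card (union_subset (filter_subset _ _) (filter_subset _ _))
    omega
  -- final arithmetic
  by_cases ha0 : A0.card = 0
  · omega
  by_cases hb0 : B0.card = 0
  · omega
  obtain ⟨P, hPeq⟩ : ∃ P, A0.card * B0.card = P := ⟨_, rfl⟩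
  have key : A0.card + B0.card ≤ P + 1 := by
    rcases Nat.exists_eq_add_of_le (show 1 ≤ A0.card by omega) with ⟨a', ha'⟩
    rcases Nat.exists_eq_add_of_le (show 1 ≤ B0.card by omega) with ⟨b', hb'⟩
    calc A0.card + B0.card = (1 + a') + (1 + b') := by rw [ha', hb']
      _ ≤ (1 + a') + (1 + b') + a' * b' := Nat.le_add_right _ _
      _ = (1 + a') * (1 + b') + 1 := by ring
      _ = P + 1 := by rw [← ha', ← hb', hPeq]
  rw [hPeq] at hserv
  omega

def bswap (n i : ℕ) : Equiv.Perm (Fin n) :=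
  if h : (n+1)/2 + i < n then
    Equiv.swap ⟨(n+1)/2, by omega⟩ ⟨(n+1)/2 + i, h⟩
  else 1

def bbr (n : ℕ) : Equiv.Perm (Fin n) :=
  if h : (n+1)/2 < n then
    Equiv.swap ⟨(n+1)/2 - 1, by omega⟩ ⟨(n+1)/2, h⟩
  else 1

def bstrat (n t : ℕ) : Equiv.Perm (Fin n) :=
  if t % 4 = 0 then 1
  else if t % 4 = 1 then bswap n (t/4)
  else if t % 4 = 2 then bbr n * bswap n (t/4)
  else bswap n (t/4)

lemma swap_step {n : ℕ} (x y : Fin n) (h : x = y ∨ (barbell n).Adj x y) (v : Fin n) :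
    Equiv.swap x y v = v ∨ (barbell n).Adj v (Equiv.swap x y v) := by
  rcases h with h | h
  · left
    rw [h, Equiv.swap_self]
    rfl
  · by_cases hx : v = x
    · rw [hx, Equiv.swap_apply_left]
      exact Or.inr h
    · by_cases hy : v = y
      · rw [hy, Equiv.swap_apply_right]
        exact Or.inr h.symm
      · rw [Equiv.swap_apply_of_ne_of_ne hx hy]
        exact Or.inl rfl

lemma bswap_invol (n i : ℕ) (v : Fin n) : bswap n i (bswap n i v) = v := by
  unfold bswap
  split
  · exact Equiv.swap_apply_self _ _ _
  · rfl

lemma bbr_invol (n : ℕ) (v : Fin n) : bbr n (bbr n v) = v := by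
  unfold bbr
  split
  · exact Equiv.swap_apply_self _ _ _
  · rfl

lemma bswap_edge (n i : ℕ) (v : Fin n) :
    bswap n i v = v ∨ (barbell n).Adj v (bswap n i v) := by
  unfold bswap
  split
  · rename_i h
    apply swap_step
    by_cases h0 : i = 0
    · left
      exact Fin.ext (by simp [h0])
    · right
      rw [barbell_adj]
      refine ⟨?_, Or.inr (Or.inl ⟨le_refl _, by simp⟩)⟩
      intro hcon
      have := congrArg Fin.val hcon
      simp at this
      omega
  · exact Or.inl rfl

lemma bbr_edge (n : ℕ) (v : Fin n) :
    bbr n v = v ∨ (barbell n).Adj v (bbr n v) := by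
  unfold bbr
  split
  · rename_i h
    apply swap_step
    right
    rw [barbell_adj]
    refine ⟨?_, Or.inr (Or.inr (Or.inl ⟨by simp, by simp⟩))⟩
    intro hcon
    have := congrArg Fin.val hcon
    simp at this
    omega
  · exact Or.inl rfl

set_option maxHeartbeats 2000000 in
lemma upper (n : ℕ) (hn : 2 ≤ n) :
    ∃ mf : ℕ, ∃ f : ℕ → Equiv.Perm (Fin n), IsAcqStrategy (barbell n) mf f := by
  classical
  have hk1 : 1 ≤ (n+1)/2 := by omega
  have hkn : (n+1)/2 < n := by omega
  set k := (n+1)/2 with hk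
  refine ⟨4 * (n - k), bstrat n, ?_, ?_, ?_⟩
  · -- initial placement
    show bstrat n 0 = Equiv.refl (Fin n)
    unfold bstrat
    norm_num
    rfl
  · -- matching steps
    intro t ht
    have hmod : t % 4 = 0 ∨ t % 4 = 1 ∨ t % 4 = 2 ∨ t % 4 = 3 := by omega
    rcases hmod with hm | hm | hm | hm
    · have hdiv : (t+1) / 4 = t / 4 := by omega
      have hmod1 : (t+1) % 4 = 1 := by omega
      refine ⟨bswap n (t/4), bswap_invol n _, bswap_edge n _, ?_⟩
      intro a
      unfold bstrat
      rw [hm, hmod1, hdiv]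
      norm_num
    · have hdiv : (t+1) / 4 = t / 4 := by omega
      have hmod1 : (t+1) % 4 = 2 := by omega
      refine ⟨bbr n, bbr_invol n, bbr_edge n, ?_⟩
      intro a
      unfold bstrat
      rw [hm, hmod1, hdiv]
      norm_num
    · have hdiv : (t+1) / 4 = t / 4 := by omega
      have hmod1 : (t+1) % 4 = 3 := by omega
      refine ⟨bbr n, bbr_invol n, bbr_edge n, ?_⟩
      intro a
      unfold bstrat
      rw [hm, hmod1, hdiv]
      norm_num
      rw [bbr_invol]
    · have hmod1 : (t+1) % 4 = 0 := by omega
      refine ⟨bswap n (t/4), bswap_invol n _, bswap_edge n _, ?_⟩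
      intro a
      unfold bstrat
      rw [hm, hmod1]
      norm_num
      rw [bswap_invol]
  · -- meetings
    have haux : ∀ a b : Fin n, (a : ℕ) < k → k ≤ (b : ℕ) →
        ∃ t ≤ 4 * (n - k), (barbell n).Adj (bstrat n t a) (bstrat n t b) := by
      intro a b hak hbk
      have hbn := b.isLt
      refine ⟨4 * ((b : ℕ) - k) + 2, by omega, ?_⟩
      have hdiv : (4 * ((b : ℕ) - k) + 2) / 4 = (b : ℕ) - k := by omega
      have hmod : (4 * ((b : ℕ) - k) + 2) % 4 = 2 := by omega
      have hne : (4 * ((b : ℕ) - k) + 2) % 4 ≠ 0 := by omega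
      have hne1 : (4 * ((b : ℕ) - k) + 2) % 4 ≠ 1 := by omega
      have hstep : bstrat n (4 * ((b : ℕ) - k) + 2) = bbr n * bswap n ((b:ℕ) - k) := by
        unfold bstrat
        rw [hmod, hdiv]
        norm_num
      rw [hstep]
      have hi : k + ((b:ℕ) - k) < n := by omega
      have hbs : bswap n ((b:ℕ) - k) =
          Equiv.swap ⟨k, by omega⟩ ⟨k + ((b:ℕ) - k), hi⟩ := by
        unfold bswap
        rw [dif_pos hi]
      have hbr : bbr n = Equiv.swap ⟨k - 1, by omega⟩ ⟨k, by omega⟩ := by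
        unfold bbr
        rw [dif_pos hkn]
      have hbeq : (⟨k + ((b : ℕ) - k), hi⟩ : Fin n) = b := Fin.ext (by simp; omega)
      have hfb : bswap n ((b:ℕ) - k) b = ⟨k, by omega⟩ := by
        rw [hbs, hbeq]
        exact Equiv.swap_apply_right _ _
      have hanb : a ≠ b := fun h => by rw [h] at hak; omega
      have hfa : bswap n ((b:ℕ) - k) a = a := by
        rw [hbs, hbeq]
        apply Equiv.swap_apply_of_ne_of_ne
        · intro h
          have := congrArg Fin.val h
          simp at this
          omega
        · exact hanb
      have hfb2 : bbr n (⟨k, by omega⟩ : Fin n) = ⟨k - 1, by omega⟩ := by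
        rw [hbr]
        exact Equiv.swap_apply_right _ _
      simp only [Equiv.Perm.mul_apply, hfa, hfb, hfb2]
      by_cases hag : a = (⟨k-1, by omega⟩ : Fin n)
      · have hfa2 : bbr n a = ⟨k, by omega⟩ := by
          rw [hbr, hag]
          exact Equiv.swap_apply_left _ _
        rw [hfa2, barbell_adj]
        refine ⟨?_, Or.inr (Or.inr (Or.inr ⟨by simp [← hk], by simp [← hk]⟩))⟩
        intro hcon
        have := congrArg Fin.val hcon
        simp at this
        omega
      · have hfa2 : bbr n a = a := by
          rw [hbr]
          apply Equiv.swap_apply_of_ne_of_ne hag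
          intro h
          have := congrArg Fin.val h
          simp at this
          omega
        rw [hfa2, barbell_adj]
        refine ⟨?_, Or.inl ⟨by rw [← hk]; omega, by simp [← hk]; omega⟩⟩
        intro hcon
        rw [hcon] at hag
        exact hag rfl
    intro a b hne
    have h0 : bstrat n 0 = 1 := by
      unfold bstrat
      norm_num
    rcases lt_or_ge (a : ℕ) k with ha | ha
    · rcases lt_or_ge (b : ℕ) k with hb | hb
      · refine ⟨0, by omega, ?_⟩
        rw [h0]
        simp only [Equiv.Perm.one_apply]
        rw [barbell_adj]
        exact ⟨hne, Or.inl ⟨by rw [← hk]; omega, by rw [← hk]; omega⟩⟩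
      · exact haux a b ha hb
    · rcases lt_or_ge (b : ℕ) k with hb | hb
      · obtain ⟨t, ht, hadj⟩ := haux b a hb ha
        exact ⟨t, ht, hadj.symm⟩
      · refine ⟨0, by omega, ?_⟩
        rw [h0]
        simp only [Equiv.Perm.one_apply]
        rw [barbell_adj]
        exact ⟨hne, Or.inr (Or.inl ⟨by rw [← hk]; omega, by rw [← hk]; omega⟩)⟩

/-- The acquaintance time of the barbell graph on `n` vertices is at least `n - 2`. -/
theorem AC_barbell_ge (n : ℕ) (hn : 2 ≤ n) : n - 2 ≤ AC (barbell n) := by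
  have hne : {m | ∃ f : ℕ → Equiv.Perm (Fin n), IsAcqStrategy (barbell n) m f}.Nonempty := by
    obtain ⟨mf, f, hf⟩ := upper n hn
    exact ⟨mf, f, hf⟩
  obtain ⟨f, hf⟩ := Nat.sInf_mem hne
  exact lower_bound hn _ f hf
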